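/- Let X and Y be compact subsets of a metric space (Z,δ) such that X ∪ Y (with the induced metric) is a geodesic space. Then for every ε > 0, the intersection of the ε-neighborhoods satisfies Xᵉ ∩ Yᵉ ⊆ (X ∩ Y)^{2ε}, where Aᵉ = {z ∈ Z : δ(z,A) < ε} denotes the ε-neighborhood of A in Z. -/
import Mathlib


open Metric Set

/-- A subset `S` of a metric space is geodesic if any two of its points are joined by
an isometric path `[0, dist x y] → S`. -/
def IsGeodesicSubset {Z : Type*} [MetricSpace Z] (S : Set Z) : Prop :=
  ∀ x ∈ S, ∀ y ∈ S, ∃ p : ℝ → Z,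
    p 0 = x ∧ p (dist x y) = y ∧
    (∀ t ∈ Set.Icc (0 : ℝ) (dist x y), p t ∈ S) ∧
    (∀ s ∈ Set.Icc (0 : ℝ) (dist x y), ∀ t ∈ Set.Icc (0 : ℝ) (dist x y),
      dist (p s) (p t) = |s - t|)

/-- If `X ∪ Y` is geodesic, then the `ε`-neighborhoods satisfy
`Xᵉ ∩ Yᵉ ⊆ (X ∩ Y)^{2ε}`. -/
theorem stmt_4 {Z : Type*} [MetricSpace Z] (X Y : Set Z)
    (hX : IsCompact X) (hY : IsCompact Y)
    (hgeo : IsGeodesicSubset (X ∪ Y))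
    (ε : ℝ) (hε : 0 < ε) :
    thickening ε X ∩ thickening ε Y ⊆ thickening (2 * ε) (X ∩ Y) := by
  rintro z ⟨hzX, hzY⟩
  obtain ⟨x, hxX, hzx⟩ := (mem_thickening_iff).1 hzX
  obtain ⟨y, hyY, hzy⟩ := (mem_thickening_iff).1 hzY
  obtain ⟨p, hp0, hpL, hpS, hiso⟩ := hgeo x (Or.inl hxX) y (Or.inr hyY)
  set L := dist x y with hL
  have hLnn : (0 : ℝ) ≤ L := dist_nonneg
  have hLlt : L < 2 * ε := by
    calc L ≤ dist x z + dist z y := dist_triangle x z y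
    _ = dist z x + dist z y := by rw [dist_comm x z]
    _ < ε + ε := by linarith
    _ = 2 * ε := by ring
  -- p is continuous on Icc 0 L
  have hcont : ContinuousOn p (Icc 0 L) := by
    apply LipschitzOnWith.continuousOn (K := 1)
    intro s hs t ht
    rw [edist_nndist, edist_nndist, ← ENNReal.coe_mul, ENNReal.coe_le_coe,
      one_mul, ← NNReal.coe_le_coe, coe_nndist, coe_nndist, hiso s hs t ht]
    exact le_of_eq (Real.dist_eq s t).symm
  have hAclosed : IsClosed (Icc 0 L ∩ p ⁻¹' X) :=
    hcont.preimage_isClosed_of_isClosed isClosed_Icc hX.isClosed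
  have hBclosed : IsClosed (Icc 0 L ∩ p ⁻¹' Y) :=
    hcont.preimage_isClosed_of_isClosed isClosed_Icc hY.isClosed
  have hconn : IsPreconnected (Icc (0:ℝ) L) := isPreconnected_Icc
  obtain ⟨t, ht⟩ := (isPreconnected_closed_iff.1 hconn)
      (Icc 0 L ∩ p ⁻¹' X) (Icc 0 L ∩ p ⁻¹' Y) hAclosed hBclosed
      (fun s hs => by
        rcases hpS s hs with h | h
        · exact Or.inl ⟨hs, h⟩
        · exact Or.inr ⟨hs, h⟩)
      ⟨0, ⟨le_refl 0, hLnn⟩, ⟨⟨le_refl 0, hLnn⟩, by simpa [hp0] using hxX⟩⟩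
      ⟨L, ⟨hLnn, le_refl L⟩, ⟨⟨hLnn, le_refl L⟩, by simpa [hpL] using hyY⟩⟩
  obtain ⟨htIcc, ⟨-, htX⟩, ⟨-, htY⟩⟩ := ht
  have ht0 : t ∈ Icc (0:ℝ) L := htIcc
  have hd1 : dist z (p t) ≤ dist z x + t := by
    have := hiso 0 ⟨le_refl 0, hLnn⟩ t ht0
    rw [hp0] at this
    have h1 : dist x (p t) = t := by
      rw [this, abs_of_nonpos (by linarith [ht0.1])]; ring
    calc dist z (p t) ≤ dist z x + dist x (p t) := dist_triangle z x (p t)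
    _ = dist z x + t := by rw [h1]
  have hd2 : dist z (p t) ≤ dist z y + (L - t) := by
    have := hiso L ⟨hLnn, le_refl L⟩ t ht0
    rw [hpL] at this
    have h1 : dist y (p t) = L - t := by
      rw [this, abs_of_nonneg (by linarith [ht0.2])]
    calc dist z (p t) ≤ dist z y + dist y (p t) := dist_triangle z y (p t)
    _ = dist z y + (L - t) := by rw [h1]
  have : dist z (p t) < 2 * ε := by linarith
  exact mem_thickening_iff.2 ⟨p t, ⟨htX, htY⟩, this⟩
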